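/- arXiv:1603.07033 — 4 statements merged into one kernel-verified Lean document; each statement's English description precedes it below -/
import Mathlib

section
/- Let h : ℝ → ℝ be continuous and T-periodic with h(t) < ω² for all t, where ω = 2π/T. If w : ℝ → ℝ is a C² T-periodic function with ∫₀ᵀ w(t) dt = 0 satisfying w''(t) + c·w'(t) + h(t)·w(t) = μ for all t (where c, μ are real constants), then w ≡ 0 and μ = 0. -/
open MeasureTheory intervalIntegral Real

section Helpers
open Complex

lemma periodic_lift_continuous {T : ℝ} {F : ℝ → ℂ} (hF : Continuous F)
    (hper : Function.Periodic F T) : Continuous hper.lift :=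
  hF.quotient_liftOn' _

lemma fourierCoeff_lift_eq_On {T : ℝ} (hT : 0 < T) {F : ℝ → ℂ} (hper : Function.Periodic F T)
    (n : ℤ) :
    haveI : Fact (0 < T) := ⟨hT⟩
    fourierCoeff hper.lift n = fourierCoeffOn (by linarith : (0:ℝ) < T) F n := by
  haveI : Fact (0 < T) := ⟨hT⟩
  rw [fourierCoeff_eq_intervalIntegral _ n 0, fourierCoeffOn_eq_integral]
  simp [fourier_coe_apply, Function.Periodic.lift_coe]

/-- Parseval for a continuous periodic function. -/
lemma parseval_cont {T : ℝ} (hT : 0 < T) {F : ℝ → ℂ} (hF : Continuous F)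
    (hper : Function.Periodic F T) :
    haveI : Fact (0 < T) := ⟨hT⟩
    (Summable fun n : ℤ => ‖fourierCoeff hper.lift n‖ ^ 2) ∧
      ∑' n : ℤ, ‖fourierCoeff hper.lift n‖ ^ 2 = (1 / T) * ∫ x in (0:ℝ)..T, ‖F x‖ ^ 2 := by
  haveI : Fact (0 < T) := ⟨hT⟩
  set Fc : C(AddCircle T, ℂ) := ⟨hper.lift, periodic_lift_continuous hF hper⟩ with hFc
  set FL := ContinuousMap.toLp (E := ℂ) 2 AddCircle.haarAddCircle ℂ Fc with hFL
  have hcoeff : ∀ n, fourierCoeff (FL : AddCircle T → ℂ) n = fourierCoeff hper.lift n := by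
    intro n
    exact fourierCoeff_toLp Fc n
  constructor
  · have hmem := lp.memℓp (fourierBasis.repr FL)
    have hsum := hmem.summable (by norm_num : (0:ℝ) < (2 : ENNReal).toReal)
    have : ∀ i : ℤ, ‖fourierBasis.repr FL i‖ ^ (2 : ENNReal).toReal = ‖fourierCoeff hper.lift i‖ ^ 2 := by
      intro i
      rw [fourierBasis_repr, hcoeff]
      norm_num [Real.rpow_natCast]
    exact (summable_congr this).mp hsum
  · have hpars := tsum_sq_fourierCoeff FL
    simp_rw [hcoeff] at hpars
    rw [hpars]
    have h1 : ∫ t : AddCircle T, ‖FL t‖ ^ 2 ∂AddCircle.haarAddCircle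
        = ∫ t : AddCircle T, ‖Fc t‖ ^ 2 ∂AddCircle.haarAddCircle := by
      apply MeasureTheory.integral_congr_ae
      filter_upwards [ContinuousMap.coeFn_toLp (p := 2) AddCircle.haarAddCircle (𝕜 := ℂ) Fc] with t ht
      rw [ht]
    have h2 : ∫ x in (0:ℝ)..T, ‖F x‖ ^ 2 = ∫ t : AddCircle T, ‖Fc t‖ ^ 2 ∂(volume : Measure (AddCircle T)) := by
      rw [← AddCircle.intervalIntegral_preimage T 0 (fun t => ‖Fc t‖ ^ 2), zero_add]
      rfl
    rw [h1, h2, AddCircle.volume_eq_smul_haarAddCircle, MeasureTheory.integral_smul_measure,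
      ENNReal.toReal_ofReal hT.le, smul_eq_mul]
    field_simp

/-- Wirtinger's inequality for periodic zero-mean C¹ functions. -/
lemma wirtinger {T : ℝ} (hT : 0 < T) {u : ℝ → ℝ} (hu : ContDiff ℝ 1 u)
    (hper : Function.Periodic u T) (havg : ∫ t in (0:ℝ)..T, u t = 0) :
    ∫ t in (0:ℝ)..T, u t ^ 2 ≤ (T / (2 * π)) ^ 2 * ∫ t in (0:ℝ)..T, deriv u t ^ 2 := by
  haveI : Fact (0 < T) := ⟨hT⟩
  set F : ℝ → ℂ := fun t => (u t : ℂ) with hF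
  set G : ℝ → ℂ := fun t => Complex.ofReal (deriv u t) with hG
  have hud : Differentiable ℝ u := hu.differentiable one_ne_zero
  have hu'c : Continuous (deriv u) := hu.continuous_deriv le_rfl
  have hFc : Continuous F := Complex.continuous_ofReal.comp hu.continuous
  have hGc : Continuous G := Complex.continuous_ofReal.comp hu'c
  have hFper : Function.Periodic F T := fun x => by simp [hF, hper x]
  have hGper : Function.Periodic G T := by
    intro x
    simp only [hG]
    congr 1
    have : u = fun y => u (y + T) := funext fun y => (hper y).symm
    calc deriv u (x + T) = deriv (fun y => u (y + T)) x := (deriv_comp_add_const u T x).symm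
    _ = deriv u x := by rw [← this]
  have hFderiv : ∀ x : ℝ, HasDerivAt F (G x) x := fun x =>
    ((hud x).hasDerivAt).ofReal_comp
  -- zero mean
  have hc0 : fourierCoeff hFper.lift 0 = 0 := by
    rw [fourierCoeff_eq_intervalIntegral _ 0 0, zero_add]
    have hInt : ∫ x in (0:ℝ)..T, (fourier (-(0:ℤ)) (x : AddCircle T) : ℂ) • hFper.lift (x : AddCircle T)
        = ((∫ t in (0:ℝ)..T, u t : ℝ) : ℂ) := by
      rw [← intervalIntegral.integral_ofReal]
      apply intervalIntegral.integral_congr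
      intro x _
      simp [Function.Periodic.lift_coe, hF]
    rw [hInt, havg]
    simp
  -- recursion
  have hrec : ∀ n : ℤ, n ≠ 0 →
      ‖fourierCoeff hFper.lift n‖ ≤ T / (2 * π) * ‖fourierCoeff hGper.lift n‖ := by
    intro n hn
    have key := fourierCoeffOn_of_hasDerivAt (by linarith : (0:ℝ) < T) hn
      (fun x _ => hFderiv x) ((hGc.intervalIntegrable 0 T))
    rw [fourierCoeff_lift_eq_On hT hFper n, fourierCoeff_lift_eq_On hT hGper n, key]
    have hFT : F T - F 0 = 0 := by
      have := hFper 0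
      rw [zero_add] at this
      rw [this, sub_self]
    rw [hFT, mul_zero, zero_sub, mul_neg, norm_neg, norm_mul, norm_mul]
    have hn1 : (1:ℝ) ≤ |(n:ℝ)| := by
      rw [← Int.cast_abs]
      exact_mod_cast Int.one_le_abs hn
    have h1 : ‖(1:ℂ) / (-2 * ↑π * Complex.I * ↑n)‖ = 1 / (2 * π * |(n:ℝ)|) := by
      rw [norm_div, norm_one]
      simp [norm_mul, abs_of_pos Real.pi_pos]
    have h2 : ‖((T:ℂ) - ((0:ℝ):ℂ))‖ = T := by
      simp [Complex.ofReal_zero, sub_zero, Complex.norm_real, Real.norm_eq_abs, abs_of_pos hT]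
    rw [h1, h2]
    have hπ := Real.pi_pos
    have general : ∀ a : ℝ, 0 ≤ a → 1/(2*π*|(n:ℝ)|) * (T * a) ≤ T/(2*π) * a := by
      intro a ha
      have hle : 1/(2*π*|(n:ℝ)|) ≤ 1/(2*π) := by
        apply one_div_le_one_div_of_le (by positivity)
        nlinarith
      calc 1/(2*π*|(n:ℝ)|) * (T * a) ≤ 1/(2*π) * (T * a) := by
            apply mul_le_mul_of_nonneg_right hle (by positivity)
        _ = T/(2*π) * a := by ring
    exact general _ (norm_nonneg _)
  -- Parseval
  obtain ⟨hsumF, hparsF⟩ := parseval_cont hT hFc hFper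
  obtain ⟨hsumG, hparsG⟩ := parseval_cont hT hGc hGper
  have hterm : ∀ n : ℤ, ‖fourierCoeff hFper.lift n‖^2
      ≤ (T/(2*π))^2 * ‖fourierCoeff hGper.lift n‖^2 := by
    intro n
    rcases eq_or_ne n 0 with rfl | hn
    · rw [hc0]
      simp only [norm_zero, ne_eq, OfNat.ofNat_ne_zero, not_false_eq_true, zero_pow]
      positivity
    · have hle := hrec n hn
      have h1 : ‖fourierCoeff hFper.lift n‖^2 ≤ (T/(2*π) * ‖fourierCoeff hGper.lift n‖)^2 :=
        pow_le_pow_left₀ (norm_nonneg _) hle 2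
      calc ‖fourierCoeff hFper.lift n‖^2 ≤ (T/(2*π) * ‖fourierCoeff hGper.lift n‖)^2 := h1
        _ = (T/(2*π))^2 * ‖fourierCoeff hGper.lift n‖^2 := by ring
  have hts : ∑' n : ℤ, ‖fourierCoeff hFper.lift n‖^2
      ≤ ∑' n : ℤ, (T/(2*π))^2 * ‖fourierCoeff hGper.lift n‖^2 :=
    Summable.tsum_le_tsum hterm hsumF (hsumG.mul_left _)
  rw [tsum_mul_left, hparsF, hparsG] at hts
  have hFu : ∫ x in (0:ℝ)..T, ‖F x‖^2 = ∫ t in (0:ℝ)..T, u t^2 :=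
    intervalIntegral.integral_congr (fun x _ => by
      show ‖((u x : ℝ) : ℂ)‖^2 = u x ^ 2
      rw [Complex.norm_real, Real.norm_eq_abs, _root_.sq_abs])
  have hGu : ∫ x in (0:ℝ)..T, ‖G x‖^2 = ∫ t in (0:ℝ)..T, deriv u t^2 :=
    intervalIntegral.integral_congr (fun x _ => by
      show ‖((deriv u x : ℝ) : ℂ)‖^2 = deriv u x ^ 2
      rw [Complex.norm_real, Real.norm_eq_abs, _root_.sq_abs])
  rw [hFu, hGu] at hts
  have hπ := Real.pi_pos
  have := mul_le_mul_of_nonneg_left hts hT.le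
  calc ∫ t in (0:ℝ)..T, u t ^ 2 = T * ((1/T) * ∫ t in (0:ℝ)..T, u t^2) := by
        field_simp
    _ ≤ T * ((T/(2*π))^2 * ((1/T) * ∫ t in (0:ℝ)..T, deriv u t^2)) := this
    _ = (T / (2 * π)) ^ 2 * ∫ t in (0:ℝ)..T, deriv u t ^ 2 := by
        field_simp

end Helpers

/-- The only `T`-periodic zero-average solution of `w'' + c w' + h w = μ`, when
`h < ω²`, is the trivial one `w ≡ 0`, `μ = 0`. -/
theorem zero_average_linear_trivial (T : ℝ) (hT : 0 < T) (c μ : ℝ) (h w : ℝ → ℝ)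
    (hh : Continuous h) (hhper : Function.Periodic h T)
    (hhbd : ∀ t, h t < (2 * π / T) ^ 2)
    (hw : ContDiff ℝ 2 w) (hwper : Function.Periodic w T)
    (hwavg : ∫ t in (0:ℝ)..T, w t = 0)
    (heq : ∀ t, iteratedDeriv 2 w t + c * deriv w t + h t * w t = μ) :
    (∀ t, w t = 0) ∧ μ = 0 := by
  have hπ := Real.pi_pos
  have hwd : Differentiable ℝ w := hw.differentiable two_ne_zero
  have hw1 : ContDiff ℝ 1 (deriv w) := by
    have h2 : ContDiff ℝ ((1:ℕ) + (1:ℕ) : ℕ) w := by exact_mod_cast hw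
    simpa using ContDiff.iterate_deriv' 1 1 h2
  have hw'd : Differentiable ℝ (deriv w) := hw1.differentiable one_ne_zero
  have hw'c : Continuous (deriv w) := hw1.continuous
  have hw''c : Continuous (deriv (deriv w)) := hw1.continuous_deriv le_rfl
  have hwc : Continuous w := hw.continuous
  have h2eq : ∀ t, iteratedDeriv 2 w t = deriv (deriv w) t := by
    intro t
    rw [show (2:ℕ) = 1+1 from rfl, iteratedDeriv_succ, iteratedDeriv_one]
  have hw'per : Function.Periodic (deriv w) T := by
    intro x
    have hfe : w = fun y => w (y + T) := funext fun y => (hwper y).symm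
    calc deriv w (x + T) = deriv (fun y => w (y + T)) x := (deriv_comp_add_const w T x).symm
      _ = deriv w x := by rw [← hfe]
  have hwT : w T = w 0 := by have := hwper 0; rwa [zero_add] at this
  have hw'T : deriv w T = deriv w 0 := by have := hw'per 0; rwa [zero_add] at this
  -- integration by parts
  have ibp : ∫ t in (0:ℝ)..T, w t * deriv (deriv w) t
      = w T * deriv w T - w 0 * deriv w 0 - ∫ t in (0:ℝ)..T, deriv w t * deriv w t :=
    intervalIntegral.integral_mul_deriv_eq_deriv_mul
      (fun x _ => (hwd x).hasDerivAt) (fun x _ => (hw'd x).hasDerivAt)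
      (hw'c.intervalIntegrable 0 T) (hw''c.intervalIntegrable 0 T)
  have hsq : ∫ t in (0:ℝ)..T, w t * deriv w t = 0 := by
    have hF : ∀ x ∈ Set.uIcc (0:ℝ) T, HasDerivAt (fun t => w t ^ 2 / 2) (w x * deriv w x) x := by
      intro x _
      have hd := (((hwd x).hasDerivAt).pow 2).div_const 2
      refine hd.congr_deriv ?_
      simp
      ring
    have := intervalIntegral.integral_eq_sub_of_hasDerivAt hF
      ((hwc.mul hw'c).intervalIntegrable 0 T)
    rw [this, hwT]
    ring
  -- energy identity
  have hpt : ∀ t, w t * deriv (deriv w) t = μ * w t - c * (w t * deriv w t) - h t * w t ^ 2 := by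
    intro t
    have h3 : deriv (deriv w) t = μ - c * deriv w t - h t * w t := by
      have := heq t
      rw [h2eq t] at this
      linarith
    rw [h3]
    ring
  have e1 : ∫ t in (0:ℝ)..T, w t * deriv (deriv w) t
      = μ * (∫ t in (0:ℝ)..T, w t) - c * (∫ t in (0:ℝ)..T, w t * deriv w t)
        - ∫ t in (0:ℝ)..T, h t * w t ^ 2 := by
    rw [← intervalIntegral.integral_const_mul, ← intervalIntegral.integral_const_mul,
      ← intervalIntegral.integral_sub, ← intervalIntegral.integral_sub]
    · exact intervalIntegral.integral_congr fun t _ => hpt t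
    · exact ((continuous_const.mul hwc).sub
        (continuous_const.mul (hwc.mul hw'c))).intervalIntegrable 0 T
    · exact ((hh.mul (hwc.pow 2))).intervalIntegrable 0 T
    · exact (continuous_const.mul hwc).intervalIntegrable 0 T
    · exact (continuous_const.mul (hwc.mul hw'c)).intervalIntegrable 0 T
  have hsqeq : ∫ t in (0:ℝ)..T, deriv w t * deriv w t = ∫ t in (0:ℝ)..T, deriv w t ^ 2 :=
    intervalIntegral.integral_congr fun t _ => (sq (deriv w t)).symm
  have energy : ∫ t in (0:ℝ)..T, deriv w t ^ 2 = ∫ t in (0:ℝ)..T, h t * w t ^ 2 := by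
    rw [e1, hwavg, hsq] at ibp
    rw [hwT, hw'T] at ibp
    rw [← hsqeq]
    linarith
  -- Wirtinger
  have wir := wirtinger hT (hw.of_le one_le_two) hwper hwavg
  -- combine
  have hgnn : ∀ t, 0 ≤ ((2*π/T)^2 - h t) * w t ^ 2 := fun t =>
    mul_nonneg (by linarith [hhbd t]) (sq_nonneg _)
  have hgc : Continuous fun t => ((2*π/T)^2 - h t) * w t ^ 2 :=
    (continuous_const.sub hh).mul (hwc.pow 2)
  have hgle : ∫ t in (0:ℝ)..T, ((2*π/T)^2 - h t) * w t ^ 2 ≤ 0 := by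
    have expand : ∫ t in (0:ℝ)..T, ((2*π/T)^2 - h t) * w t ^ 2
        = (2*π/T)^2 * (∫ t in (0:ℝ)..T, w t ^ 2) - ∫ t in (0:ℝ)..T, h t * w t ^ 2 := by
      rw [← intervalIntegral.integral_const_mul, ← intervalIntegral.integral_sub]
      · exact intervalIntegral.integral_congr fun t _ => by ring
      · exact (continuous_const.mul (hwc.pow 2)).intervalIntegrable 0 T
      · exact (hh.mul (hwc.pow 2)).intervalIntegrable 0 T
    have hmul := mul_le_mul_of_nonneg_left wir (by positivity : (0:ℝ) ≤ (2*π/T)^2)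
    have hkey : (2*π/T)^2 * ((T/(2*π))^2 * ∫ t in (0:ℝ)..T, deriv w t ^ 2)
        = ∫ t in (0:ℝ)..T, deriv w t ^ 2 := by
      rw [← mul_assoc]
      have : (2*π/T)^2 * (T/(2*π))^2 = 1 := by
        field_simp
      rw [this, one_mul]
    rw [hkey] at hmul
    rw [expand]
    linarith [energy]
  have hw0 : ∀ t ∈ Set.Icc (0:ℝ) T, w t = 0 := by
    intro t ht
    by_contra hne
    have hpos : 0 < ∫ t in (0:ℝ)..T, ((2*π/T)^2 - h t) * w t ^ 2 := by
      apply intervalIntegral.integral_pos hT hgc.continuousOn (fun x _ => hgnn x)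
      refine ⟨t, ht, mul_pos (by linarith [hhbd t]) ?_⟩
      have := abs_pos.mpr hne
      calc (0:ℝ) < |w t| ^ 2 := pow_pos this 2
        _ = w t ^ 2 := _root_.sq_abs _
    linarith
  have hwall : ∀ t, w t = 0 := by
    intro t
    obtain ⟨y, hy, hxy⟩ := hwper.exists_mem_Ico₀ hT t
    rw [hxy]
    exact hw0 y ⟨hy.1, hy.2.le⟩
  refine ⟨hwall, ?_⟩
  have hwfun : w = fun _ => 0 := funext hwall
  have h0 := heq 0
  rw [hwfun] at h0
  simpa [show (2:ℕ) = 1+1 from rfl, iteratedDeriv_succ, iteratedDeriv_zero] using h0.symm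
end

section
/- Let h : ℝ → ℝ be continuous and T-periodic with h(t) < c²/4 + ω² for all t, where ω = 2π/T. Then any nontrivial C² T-periodic solution w of w''(t) + c·w'(t) + h(t)·w(t) = 0 has no zeros, i.e., is of one sign. -/
open MeasureTheory intervalIntegral Real

section Aux

open Set Filter Topology

private lemma sign_dichotomy' (w : ℝ → ℝ) (hc : Continuous w) (α β : ℝ)
    (hne : ∀ t ∈ Set.Ioo α β, w t ≠ 0) :
    (∀ t ∈ Set.Ioo α β, 0 < w t) ∨ (∀ t ∈ Set.Ioo α β, w t < 0) := by
  by_cases hab : α < β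
  · have hm : (α + β) / 2 ∈ Set.Ioo α β := ⟨by linarith, by linarith⟩
    have key : ∀ t ∈ Set.Ioo α β, ∀ s ∈ Set.Ioo α β, 0 < w t → 0 < w s := by
      intro t ht s hs hwt
      by_contra hws
      have hws' : w s < 0 := lt_of_le_of_ne (not_lt.mp hws) (hne s hs)
      have h0 : (0:ℝ) ∈ Set.uIcc (w s) (w t) := by
        rw [Set.mem_uIcc]; left; constructor <;> linarith
      obtain ⟨z, hz, hz0⟩ := intermediate_value_uIcc (hc.continuousOn (s := Set.uIcc s t)) h0
      exact hne z (Set.ordConnected_Ioo.uIcc_subset hs ht hz) hz0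
    rcases (hne _ hm).lt_or_gt with hneg | hpos
    · right; intro t ht
      by_contra hge
      have : 0 < w t := lt_of_le_of_ne (not_lt.mp hge) (Ne.symm (hne t ht))
      exact absurd (key t ht _ hm this) (by linarith)
    · left; exact fun t ht => key _ hm t ht hpos
  · left; intro t ht; exact absurd (ht.1.trans ht.2) hab

private lemma flip_key' (T : ℝ) (hT : 0 < T) (w : ℝ → ℝ) (hd1 : Differentiable ℝ w)
    (hwper : Function.Periodic w T) (a : ℝ) (hwa : w a = 0)
    (hda : deriv w a ≠ 0) (hpos : ∀ t ∈ Set.Ioo a (a + T), 0 < w t) : False := by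
  have hwaT : w (a + T) = 0 := by rw [hwper a]; exact hwa
  have hdper : deriv w (a + T) = deriv w a := by
    have hfun : (fun s => w (s + T)) = w := funext hwper
    calc deriv w (a + T) = deriv (fun s => w (s + T)) a := (deriv_comp_add_const ..).symm
      _ = deriv w a := by rw [hfun]
  have h1 : 0 ≤ deriv w a := by
    have hd := (hd1 a).hasDerivAt
    rw [hasDerivAt_iff_tendsto_slope] at hd
    have hd' : Tendsto (slope w a) (𝓝[>] a) (𝓝 (deriv w a)) :=
      hd.mono_left (nhdsWithin_mono a (fun x hx => ne_of_gt hx))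
    refine ge_of_tendsto hd' ?_
    filter_upwards [Ioo_mem_nhdsGT (by linarith : a < a + T)] with t ht
    rw [slope_def_field, hwa, sub_zero]
    exact le_of_lt (div_pos (hpos t ht) (by linarith [ht.1]))
  have h2 : deriv w (a + T) ≤ 0 := by
    have hd := (hd1 (a + T)).hasDerivAt
    rw [hasDerivAt_iff_tendsto_slope] at hd
    have hd' : Tendsto (slope w (a + T)) (𝓝[<] (a + T)) (𝓝 (deriv w (a + T))) :=
      hd.mono_left (nhdsWithin_mono _ (fun x hx => ne_of_lt hx))
    refine le_of_tendsto hd' ?_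
    filter_upwards [Ioo_mem_nhdsLT (by linarith : a < a + T)] with t ht
    rw [slope_def_field, hwaT, sub_zero]
    exact le_of_lt (div_neg_of_pos_of_neg (hpos t ht) (by linarith [ht.2]))
  rw [hdper] at h2
  exact hda (le_antisymm h2 h1)

private lemma sturm_key' (T : ℝ) (hT : 0 < T) (c : ℝ) (h w : ℝ → ℝ)
    (hh : Continuous h)
    (hhbd : ∀ t, h t < c ^ 2 / 4 + (2 * π / T) ^ 2)
    (hd1 : Differentiable ℝ w) (hd2 : Differentiable ℝ (deriv w))
    (heq2 : ∀ t, deriv (deriv w) t = -(c * deriv w t) - h t * w t)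
    (α β : ℝ) (hab : α < β) (hba : β - α ≤ T / 2)
    (hwa : w α = 0) (hwb : w β = 0)
    (hpos : ∀ t ∈ Set.Ioo α β, 0 < w t) : False := by
  have hπ := Real.pi_pos
  set ω : ℝ := 2 * π / T with hω
  have hωpos : 0 < ω := by positivity
  set v : ℝ → ℝ := fun t => Real.exp (c / 2 * t) * w t with hv
  set v' : ℝ → ℝ := fun t => Real.exp (c / 2 * t) * (c / 2 * w t + deriv w t) with hv'd
  set u : ℝ → ℝ := fun t => Real.sin (ω * (t - α)) with hu
  set u' : ℝ → ℝ := fun t => Real.cos (ω * (t - α)) * ω with hu'd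
  have hexp : ∀ t : ℝ, HasDerivAt (fun s => Real.exp (c / 2 * s))
      (Real.exp (c / 2 * t) * (c / 2)) t :=
    fun t => (((hasDerivAt_id t).const_mul (c / 2)).congr_deriv (by ring)).exp
  have hvder : ∀ t, HasDerivAt v (v' t) t := by
    intro t
    have := (hexp t).mul (hd1 t).hasDerivAt
    exact this.congr_deriv (by simp only [hv'd]; ring)
  have hv'der : ∀ t, HasDerivAt v' ((c ^ 2 / 4 - h t) * v t) t := by
    intro t
    have hin : HasDerivAt (fun s => c / 2 * w s + deriv w s)
        (c / 2 * deriv w t + deriv (deriv w) t) t :=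
      ((hd1 t).hasDerivAt.const_mul (c / 2)).add (hd2 t).hasDerivAt
    have := (hexp t).mul hin
    exact this.congr_deriv (by rw [heq2 t]; simp only [hv]; ring)
  have hlin : ∀ t : ℝ, HasDerivAt (fun s => ω * (s - α)) ω t := fun t =>
    (((hasDerivAt_id t).sub_const α).const_mul ω).congr_deriv (by ring)
  have huder : ∀ t, HasDerivAt u (u' t) t := fun t => (hlin t).sin
  have hu'der : ∀ t, HasDerivAt u' (-Real.sin (ω * (t - α)) * ω * ω) t := by
    intro t
    have := ((hlin t).cos).mul_const ω
    convert this using 1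
  set W : ℝ → ℝ := fun t => v' t * u t - v t * u' t with hW
  set g : ℝ → ℝ := fun t => (c ^ 2 / 4 + ω ^ 2 - h t) * (v t * u t) with hg
  have hWder : ∀ t, HasDerivAt W (g t) t := by
    intro t
    have := ((hv'der t).mul (huder t)).sub ((hvder t).mul (hu'der t))
    exact this.congr_deriv (by simp only [hg, hu, hu'd]; ring)
  have hvcont : Continuous v :=
    (Real.continuous_exp.comp (continuous_const.mul continuous_id)).mul hd1.continuous
  have hucont : Continuous u :=
    Real.continuous_sin.comp (continuous_const.mul (continuous_id.sub continuous_const))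
  have hgcont : Continuous g := ((continuous_const.sub hh).mul (hvcont.mul hucont))
  have hFTC : ∫ t in α..β, g t = W β - W α :=
    intervalIntegral.integral_eq_sub_of_hasDerivAt (fun t _ => hWder t)
      (hgcont.intervalIntegrable α β)
  have hTne : T ≠ 0 := ne_of_gt hT
  have hωT : ω * (T / 2) = π := by
    have h' : ω * T = 2 * π := by rw [hω]; exact div_mul_cancel₀ _ hTne
    linarith
  have hgpos : ∀ t ∈ Set.Ioo α β, 0 < g t := by
    intro t ht
    have h1 : 0 < c ^ 2 / 4 + ω ^ 2 - h t := by have := hhbd t; rw [hω]; linarith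
    have h2 : 0 < v t := mul_pos (Real.exp_pos _) (hpos t ht)
    have h3 : 0 < u t := by
      apply Real.sin_pos_of_pos_of_lt_pi
      · exact mul_pos hωpos (by linarith [ht.1])
      · calc ω * (t - α) < ω * (T / 2) := by
              apply mul_lt_mul_of_pos_left _ hωpos
              linarith [ht.2]
          _ = π := hωT
    exact mul_pos h1 (mul_pos h2 h3)
  have hIpos : 0 < ∫ t in α..β, g t :=
    intervalIntegral_pos_of_pos_on (hgcont.intervalIntegrable α β) hgpos hab
  have hWα : W α = 0 := by
    simp only [hW, hv, hu, hwa, mul_zero, sub_self, Real.sin_zero, zero_mul, sub_zero, mul_zero]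
  have huβ : 0 ≤ u β := by
    apply Real.sin_nonneg_of_nonneg_of_le_pi
    · exact mul_nonneg hωpos.le (by linarith)
    · rw [← hωT]; exact mul_le_mul_of_nonneg_left (by linarith) (le_of_lt hωpos)
  have hv'β : v' β ≤ 0 := by
    have hd := hvder β
    rw [hasDerivAt_iff_tendsto_slope] at hd
    have hd' : Tendsto (slope v β) (𝓝[<] β) (𝓝 (v' β)) :=
      hd.mono_left (nhdsWithin_mono _ (fun x hx => ne_of_lt hx))
    refine le_of_tendsto hd' ?_
    filter_upwards [Ioo_mem_nhdsLT hab] with t ht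
    rw [slope_def_field]
    have hvβ : v β = 0 := by simp [hv, hwb]
    rw [hvβ, sub_zero]
    exact le_of_lt (div_neg_of_pos_of_neg (mul_pos (Real.exp_pos _) (hpos t ht))
      (by linarith [ht.2]))
  have hWβ : W β = v' β * u β := by
    simp only [hW, hv, hwb, mul_zero, zero_mul, sub_zero]
  rw [hFTC, hWα, sub_zero, hWβ] at hIpos
  nlinarith [mul_nonpos_of_nonpos_of_nonneg hv'β huβ]

private lemma simple_zeros' (T : ℝ) (hT : 0 < T) (c : ℝ) (h w : ℝ → ℝ)
    (hh : Continuous h) (hhper : Function.Periodic h T)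
    (hd1 : Differentiable ℝ w) (hd2 : Differentiable ℝ (deriv w))
    (heq2 : ∀ t, deriv (deriv w) t = -(c * deriv w t) - h t * w t)
    (hwper : Function.Periodic w T) (hwne : ∃ t, w t ≠ 0) :
    ∀ a, w a = 0 → deriv w a ≠ 0 := by
  intro a hwa hda
  obtain ⟨M₀, hM₀⟩ := (isCompact_Icc (a := (0:ℝ)) (b := T)).exists_bound_of_continuousOn
    hh.continuousOn
  set M : ℝ := max M₀ 0 with hM
  have hMbd : ∀ t, |h t| ≤ M := by
    intro t
    obtain ⟨y, hy, hxy⟩ := hhper.exists_mem_Ico₀ hT t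
    rw [hxy]
    exact le_trans (hM₀ y ⟨hy.1, hy.2.le⟩) (le_max_left _ _)
  have hMnn : 0 ≤ M := le_max_right _ _
  set K : NNReal := Real.toNNReal (|c| + M + 1) with hKdef
  have hK : (K : ℝ) = |c| + M + 1 := Real.coe_toNNReal _ (by positivity)
  set vf : ℝ → ℝ × ℝ → ℝ × ℝ := fun t p => (p.2, -(c * p.2) - h t * p.1) with hvf
  have hlip : ∀ t, LipschitzWith K (vf t) := by
    intro t
    apply LipschitzWith.of_dist_le_mul
    intro p q
    rw [Prod.dist_eq, Prod.dist_eq]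
    have hd1' : dist p.1 q.1 ≤ max (dist p.1 q.1) (dist p.2 q.2) := le_max_left _ _
    have hd2' : dist p.2 q.2 ≤ max (dist p.1 q.1) (dist p.2 q.2) := le_max_right _ _
    have hnn : (0:ℝ) ≤ max (dist p.1 q.1) (dist p.2 q.2) := le_trans dist_nonneg hd1'
    apply max_le
    · calc dist p.2 q.2 ≤ max (dist p.1 q.1) (dist p.2 q.2) := hd2'
        _ ≤ (K : ℝ) * max (dist p.1 q.1) (dist p.2 q.2) := by
            nlinarith [abs_nonneg c, hK]
    · simp only [Real.dist_eq] at *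
      calc |(-(c * p.2) - h t * p.1) - (-(c * q.2) - h t * q.1)|
          = |c * (q.2 - p.2) + h t * (q.1 - p.1)| := by ring_nf
        _ ≤ |c * (q.2 - p.2)| + |h t * (q.1 - p.1)| := abs_add_le _ _
        _ = |c| * |p.2 - q.2| + |h t| * |p.1 - q.1| := by
            rw [abs_mul, abs_mul, abs_sub_comm q.2 p.2, abs_sub_comm q.1 p.1]
        _ ≤ (K : ℝ) * max |p.1 - q.1| |p.2 - q.2| := by
            have h1 := hMbd t
            have h2 : |p.2 - q.2| ≤ max |p.1 - q.1| |p.2 - q.2| := le_max_right _ _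
            have h3 : |p.1 - q.1| ≤ max |p.1 - q.1| |p.2 - q.2| := le_max_left _ _
            have h4 : (0:ℝ) ≤ |p.1 - q.1| := abs_nonneg _
            have h5 : (0:ℝ) ≤ |h t| := abs_nonneg _
            have h6 : (0:ℝ) ≤ |c| := abs_nonneg _
            nlinarith
  set f : ℝ → ℝ × ℝ := fun t => (w t, deriv w t) with hf
  set gz : ℝ → ℝ × ℝ := fun _ => (0, 0) with hgz
  have hf' : ∀ t, HasDerivAt f (vf t (f t)) t := by
    intro t
    have := ((hd1 t).hasDerivAt.prodMk (hd2 t).hasDerivAt)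
    simpa [hvf, hf, heq2 t] using this
  have hg' : ∀ t : ℝ, HasDerivAt gz (vf t (gz t)) t := by
    intro t
    exact (hasDerivAt_const t ((0:ℝ), (0:ℝ))).congr_deriv (by simp [hvf, hgz]; rfl)
  have heqOn : Set.EqOn f gz (Set.Icc a (a + T)) := by
    apply ODE_solution_unique hlip
    · exact (hd1.continuous.prodMk hd2.continuous).continuousOn
    · exact fun t _ => (hf' t).hasDerivWithinAt
    · exact continuousOn_const
    · exact fun t _ => (hg' t).hasDerivWithinAt
    · simp [hf, hgz, hwa, hda]
  have hzero : ∀ t, w t = 0 := by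
    intro t
    obtain ⟨y, hy, hxy⟩ := hwper.exists_mem_Ico hT t a
    rw [hxy]
    exact congrArg Prod.fst (heqOn ⟨hy.1, hy.2.le⟩)
  obtain ⟨t₀, ht₀⟩ := hwne
  exact ht₀ (hzero t₀)

end Aux

open Set Filter Topology in
/-- If `h(t) < c²/4 + ω²`, any nontrivial `T`-periodic solution of
`w'' + c w' + h w = 0` is of one sign. -/
theorem periodic_solution_one_sign (T : ℝ) (hT : 0 < T) (c : ℝ) (h w : ℝ → ℝ)
    (hh : Continuous h) (hhper : Function.Periodic h T)
    (hhbd : ∀ t, h t < c ^ 2 / 4 + (2 * π / T) ^ 2)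
    (hw : ContDiff ℝ 2 w) (hwper : Function.Periodic w T)
    (hwne : ∃ t, w t ≠ 0)
    (heq : ∀ t, iteratedDeriv 2 w t + c * deriv w t + h t * w t = 0) :
    (∀ t, 0 < w t) ∨ (∀ t, w t < 0) := by
  -- basic smoothness facts
  have hw2 : ContDiff ℝ ((1 : ℕ) + 1) w := by exact_mod_cast hw
  have hd1 : Differentiable ℝ w := hw.differentiable (by norm_num)
  have hd2 : Differentiable ℝ (deriv w) := by
    obtain ⟨-, -, hder⟩ := contDiff_succ_iff_deriv.mp hw2
    exact hder.differentiable (by simp)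
  have hit : iteratedDeriv 2 w = deriv (deriv w) := by
    rw [show (2:ℕ) = 1 + 1 from rfl, iteratedDeriv_succ, iteratedDeriv_one]
  have heq2 : ∀ t, deriv (deriv w) t = -(c * deriv w t) - h t * w t := by
    intro t
    have := heq t
    rw [hit] at this
    linarith
  -- negated function bundle
  set w₂ : ℝ → ℝ := fun t => -w t with hw₂
  have hd1₂ : Differentiable ℝ w₂ := hd1.neg
  have hderiv₂ : deriv w₂ = fun t => -deriv w t := funext fun t => deriv.neg
  have hd2₂ : Differentiable ℝ (deriv w₂) := by rw [hderiv₂]; exact hd2.neg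
  have heq2₂ : ∀ t, deriv (deriv w₂) t = -(c * deriv w₂ t) - h t * w₂ t := by
    intro t
    rw [hderiv₂]
    have hneg : deriv (fun t => -deriv w t) t = -deriv (deriv w) t := deriv.neg
    rw [hneg, heq2 t]
    simp only [hw₂]; ring
  have hwper₂ : Function.Periodic w₂ T := fun t => by simp [hw₂, hwper t]
  -- every point is a non-zero of w
  have hnz : ∀ t, w t ≠ 0 := by
    intro a hwa0
    have hda : deriv w a ≠ 0 :=
      simple_zeros' T hT c h w hh hhper hd1 hd2 heq2 hwper hwne a hwa0
    have hwaT : w (a + T) = 0 := by rw [hwper]; exact hwa0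
    have hdaT : deriv w (a + T) ≠ 0 :=
      simple_zeros' T hT c h w hh hhper hd1 hd2 heq2 hwper hwne (a + T) hwaT
    -- nonvanishing just to the right of a
    have hr : ∀ᶠ t in 𝓝[>] a, w t ≠ 0 := by
      have hd := (hd1 a).hasDerivAt
      rw [hasDerivAt_iff_tendsto_slope] at hd
      have h2 : ∀ᶠ t in 𝓝[>] a, slope w a t ≠ 0 :=
        (hd.eventually_ne hda).filter_mono (nhdsWithin_mono _ (fun x hx => ne_of_gt hx))
      filter_upwards [h2] with t hst hwt0
      apply hst
      rw [slope_def_field, hwt0, hwa0]; simp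
    obtain ⟨uR, huR, hsubR⟩ := mem_nhdsGT_iff_exists_Ioo_subset.mp hr
    -- nonvanishing just to the left of a+T
    have hl : ∀ᶠ t in 𝓝[<] (a + T), w t ≠ 0 := by
      have hd := (hd1 (a + T)).hasDerivAt
      rw [hasDerivAt_iff_tendsto_slope] at hd
      have h2 : ∀ᶠ t in 𝓝[<] (a + T), slope w (a + T) t ≠ 0 :=
        (hd.eventually_ne hdaT).filter_mono (nhdsWithin_mono _ (fun x hx => ne_of_lt hx))
      filter_upwards [h2] with t hst hwt0
      apply hst
      rw [slope_def_field, hwt0, hwaT]; simp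
    obtain ⟨lL, hlL, hsubL⟩ := mem_nhdsLT_iff_exists_Ioo_subset.mp hl
    have huRle : uR ≤ a + T := by
      by_contra hgt
      push_neg at hgt
      exact hsubR ⟨lt_add_of_pos_right a hT, hgt⟩ hwaT
    -- first zero after a
    set Z : Set ℝ := {t | w t = 0} ∩ Set.Icc uR (a + T) with hZ
    have hZclosed : IsClosed Z :=
      (isClosed_eq hd1.continuous continuous_const).inter isClosed_Icc
    have hZne : Z.Nonempty := ⟨a + T, hwaT, huRle, le_rfl⟩
    have hZbdd : BddBelow Z := ⟨uR, fun t ht => ht.2.1⟩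
    set b := sInf Z with hb
    have hbZ : b ∈ Z := hZclosed.csInf_mem hZne hZbdd
    have hbgt : a < b := lt_of_lt_of_le huR hbZ.2.1
    have hble : b ≤ a + T := hbZ.2.2
    have hwb : w b = 0 := hbZ.1
    have hnov : ∀ t ∈ Set.Ioo a b, w t ≠ 0 := by
      intro t ht hwt0
      rcases lt_or_ge t uR with h1 | h1
      · exact hsubR ⟨ht.1, h1⟩ hwt0
      · have : b ≤ t := csInf_le hZbdd ⟨hwt0, h1, le_trans ht.2.le hble⟩
        linarith [ht.2]
    rcases eq_or_lt_of_le hble with hbeq | hblt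
    · -- w has no zeros in (a, a+T): sign flip contradiction
      have hnov' : ∀ t ∈ Set.Ioo a (a + T), w t ≠ 0 := by rw [← hbeq]; exact hnov
      rcases sign_dichotomy' w hd1.continuous a (a + T) hnov' with hp | hn
      · exact flip_key' T hT w hd1 hwper a hwa0 hda hp
      · refine flip_key' T hT w₂ hd1₂ hwper₂ a (by simp [hw₂, hwa0]) ?_ ?_
        · rw [hderiv₂]; simpa using hda
        · intro t ht
          simp only [hw₂, Left.nonneg_neg_iff, neg_pos]
          exact hn t ht
    · -- last zero before a+T
      have hbl : b ≤ lL := by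
        by_contra hgt
        push_neg at hgt
        exact hsubL ⟨hgt, hblt⟩ hwb
      set Z₂ : Set ℝ := {t | w t = 0} ∩ Set.Icc b lL with hZ₂
      have hZ₂closed : IsClosed Z₂ :=
        (isClosed_eq hd1.continuous continuous_const).inter isClosed_Icc
      have hZ₂ne : Z₂.Nonempty := ⟨b, hwb, le_rfl, hbl⟩
      have hZ₂bdd : BddAbove Z₂ := ⟨lL, fun t ht => ht.2.2⟩
      set e := sSup Z₂ with he
      have heZ : e ∈ Z₂ := hZ₂closed.csSup_mem hZ₂ne hZ₂bdd
      have hwe : w e = 0 := heZ.1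
      have hbe : b ≤ e := heZ.2.1
      have helL : e ≤ lL := heZ.2.2
      have heT : e < a + T := lt_of_le_of_lt helL hlL
      have hnov2 : ∀ t ∈ Set.Ioo e (a + T), w t ≠ 0 := by
        intro t ht hwt0
        rcases le_or_gt t lL with h1 | h1
        · have : t ≤ e := le_csSup hZ₂bdd ⟨hwt0, le_trans hbe ht.1.le, h1⟩
          linarith [ht.1]
        · exact hsubL ⟨h1, ht.2⟩ hwt0
      rcases le_or_gt (b - a) (T / 2) with hhalf | hhalf
      · rcases sign_dichotomy' w hd1.continuous a b hnov with hp | hn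
        · exact sturm_key' T hT c h w hh hhbd hd1 hd2 heq2 a b hbgt hhalf hwa0 hwb hp
        · refine sturm_key' T hT c h w₂ hh hhbd hd1₂ hd2₂ heq2₂ a b hbgt hhalf
            (by simp [hw₂, hwa0]) (by simp [hw₂, hwb]) ?_
          intro t ht
          simp only [hw₂, Left.nonneg_neg_iff, neg_pos]
          exact hn t ht
      · have hhalf2 : (a + T) - e ≤ T / 2 := by linarith
        rcases sign_dichotomy' w hd1.continuous e (a + T) hnov2 with hp | hn
        · exact sturm_key' T hT c h w hh hhbd hd1 hd2 heq2 e (a + T) heT hhalf2 hwe hwaT hp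
        · refine sturm_key' T hT c h w₂ hh hhbd hd1₂ hd2₂ heq2₂ e (a + T) heT hhalf2
            (by simp [hw₂, hwe]) (by simp [hw₂, hwaT]) ?_
          intro t ht
          simp only [hw₂, Left.nonneg_neg_iff, neg_pos]
          exact hn t ht
  -- conclude: constant sign globally
  rcases (hnz 0).lt_or_gt with hneg | hpos
  · right
    intro t
    by_contra hge
    have hpt : 0 < w t := lt_of_le_of_ne (not_lt.mp hge) (Ne.symm (hnz t))
    have h0 : (0:ℝ) ∈ Set.uIcc (w 0) (w t) := by
      rw [Set.mem_uIcc]; left; exact ⟨hneg.le, hpt.le⟩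
    obtain ⟨z, _, hz0⟩ := intermediate_value_uIcc
      (hd1.continuous.continuousOn (s := Set.uIcc 0 t)) h0
    exact hnz z hz0
  · left
    intro t
    by_contra hge
    have hpt : w t < 0 := lt_of_le_of_ne (not_lt.mp hge) (hnz t)
    have h0 : (0:ℝ) ∈ Set.uIcc (w 0) (w t) := by
      rw [Set.mem_uIcc]; right; exact ⟨hpt.le, hpos.le⟩
    obtain ⟨z, _, hz0⟩ := intermediate_value_uIcc
      (hd1.continuous.continuousOn (s := Set.uIcc 0 t)) h0
    exact hnz z hz0
end

section
/- Let g : ℝ → ℝ be C¹ with g'(u) ≤ ω₁ < ω² for all u, where ω = 2π/T. Then there exists a constant C > 0, depending only on T, ω₁ and ‖e‖_{L²(0,T)}, such that every C² T-periodic solution u of u'' + c·u' + g(u) = μ + e(t) satisfies ∫₀ᵀ (u''(t)² + u'(t)²) dt ≤ C, uniformly in μ. -/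
open MeasureTheory intervalIntegral Real

open scoped ENNReal

section WirtingerSection
variable {T : ℝ} [hT : Fact (0 < T)]

private lemma periodic_deriv_aux {E : Type*} [NormedAddCommGroup E] [NormedSpace ℝ E]
    (f : ℝ → E) (hper : Function.Periodic f T) :
    Function.Periodic (deriv f) T := by
  intro x
  have h1 : (fun y => f (y + T)) = f := funext hper
  have h2 := deriv_comp_add_const f T x
  rw [h1] at h2
  exact h2.symm

private lemma lift_eq_liftIoc_aux (f : ℝ → ℂ) (hf : Function.Periodic f T) :
    hf.lift = AddCircle.liftIoc T 0 f := by
  funext q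
  induction q using QuotientAddGroup.induction_on with
  | H b =>
    have h1 : AddCircle.liftIoc T 0 f ↑b = f (toIocMod hT.out 0 b) := by
      simp only [AddCircle.liftIoc, Function.comp_apply, AddCircle.equivIoc,
        QuotientAddGroup.equivIocMod_coe]
      rfl
    rw [h1, Function.Periodic.lift_coe]
    have h2 : b = toIocMod hT.out 0 b + toIocDiv hT.out 0 b • T := by
      have := self_sub_toIocMod hT.out 0 b
      linarith [show b - toIocMod hT.out 0 b = toIocDiv hT.out 0 b • T from this]
    conv_lhs => rw [h2]
    exact (hf.zsmul (toIocDiv hT.out 0 b)) (toIocMod hT.out 0 b)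

private lemma coeff_rel_aux (f : ℝ → ℂ) (hf : Function.Periodic f T)
    (hd : ∀ x, HasDerivAt f (deriv f x) x) (hc' : Continuous (deriv f)) (n : ℤ) (hn : n ≠ 0) :
    ‖fourierCoeff (hf.lift : AddCircle T → ℂ) n‖
      ≤ (T / (2 * π)) * ‖fourierCoeff ((periodic_deriv_aux f hf).lift : AddCircle T → ℂ) n‖ := by
  have hab : (0:ℝ) < 0 + T := lt_add_of_pos_right 0 hT.out
  have e1 : fourierCoeff (hf.lift : AddCircle T → ℂ) n = fourierCoeffOn hab f n := by
    rw [lift_eq_liftIoc_aux f hf]; exact fourierCoeff_liftIoc_eq f n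
  have e2 : fourierCoeff ((periodic_deriv_aux f hf).lift : AddCircle T → ℂ) n
      = fourierCoeffOn hab (deriv f) n := by
    rw [lift_eq_liftIoc_aux _ (periodic_deriv_aux f hf)]; exact fourierCoeff_liftIoc_eq _ n
  have key := fourierCoeffOn_of_hasDerivAt hab hn
    (fun x _ => hd x) (hc'.intervalIntegrable 0 (0 + T))
  have hfT : f (0 + T) - f 0 = 0 := by rw [hf 0, sub_self]
  rw [hfT, mul_zero, zero_sub] at key
  rw [e1, e2, key]
  rw [norm_mul, norm_neg, norm_mul]
  have h2 : ‖(1 : ℂ) / (-2 * ↑π * Complex.I * ↑n)‖ = 1 / (2 * π * |(n:ℝ)|) := by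
    simp [norm_div, norm_mul, abs_of_pos pi_pos]
  set d := fourierCoeffOn hab (deriv f) n
  have h3 : ‖((0 + T : ℝ) : ℂ) - ((0:ℝ) : ℂ)‖ = T := by
    rw [← Complex.ofReal_sub, Complex.norm_real]
    simp [abs_of_pos hT.out]
  rw [h2, h3]
  have hn1 : (1:ℝ) ≤ |(n:ℝ)| := by
    rw [← Int.cast_abs]
    exact_mod_cast Int.one_le_abs hn
  have hd0 : (0:ℝ) ≤ ‖d‖ := norm_nonneg d
  have hpi : (0:ℝ) < 2 * π := by positivity
  rw [div_mul_eq_mul_div, one_mul]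
  rw [div_mul_eq_mul_div, div_le_div_iff₀ (by positivity) hpi]
  nlinarith [mul_nonneg (mul_nonneg hT.out.le hd0) hpi.le, hT.out.le,
    mul_le_mul_of_nonneg_left hn1 (mul_nonneg (mul_nonneg hT.out.le hd0) hpi.le)]

private lemma summable_sq_fourierCoeff_aux (F : C(AddCircle T, ℂ)) :
    Summable (fun n : ℤ => ‖fourierCoeff (⇑F) n‖ ^ 2) := by
  have hm : Memℓp (fun i : ℤ =>
      fourierBasis.repr (ContinuousMap.toLp (E := ℂ) 2 AddCircle.haarAddCircle ℂ F) i) 2 :=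
    lp.memℓp _
  have hs := (memℓp_gen_iff (p := 2) (by norm_num)).mp hm
  simp only [fourierBasis_repr, fourierCoeff_toLp] at hs
  convert hs using 2 with n
  norm_num

private lemma tsum_sq_fourierCoeff_cont_aux (F : C(AddCircle T, ℂ)) :
    ∑' n : ℤ, ‖fourierCoeff (⇑F) n‖ ^ 2
      = ∫ t : AddCircle T, ‖F t‖ ^ 2 ∂AddCircle.haarAddCircle := by
  have h := tsum_sq_fourierCoeff (ContinuousMap.toLp (E := ℂ) 2 AddCircle.haarAddCircle ℂ F)
  simp only [fourierCoeff_toLp] at h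
  rw [h]
  refine integral_congr_ae ?_
  filter_upwards [ContinuousMap.coeFn_toLp (p := 2) (𝕜 := ℂ) AddCircle.haarAddCircle F] with t ht
  rw [ht]

private lemma haar_integral_eq_aux (G : AddCircle T → ℝ) :
    ∫ x in (0:ℝ)..T, G ↑x = T * ∫ t : AddCircle T, G t ∂AddCircle.haarAddCircle := by
  have h := AddCircle.intervalIntegral_preimage T 0 G
  rw [zero_add] at h
  rw [h, AddCircle.volume_eq_smul_haarAddCircle, MeasureTheory.integral_smul_measure,
    ENNReal.toReal_ofReal hT.out.le, smul_eq_mul]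

/-- **Wirtinger's inequality** for zero-mean `T`-periodic `C¹` functions. -/
private lemma wirtinger_aux (f : ℝ → ℝ) (hf : ContDiff ℝ 1 f) (hper : Function.Periodic f T)
    (hmean : ∫ t in (0:ℝ)..T, f t = 0) :
    ∫ t in (0:ℝ)..T, f t ^ 2 ≤ (T / (2 * π)) ^ 2 * ∫ t in (0:ℝ)..T, deriv f t ^ 2 := by
  set fc : ℝ → ℂ := fun t => (f t : ℂ) with hfc
  have hpc : Function.Periodic fc T := fun x => by simp [hfc, hper x]
  have hd : ∀ x, HasDerivAt fc (Complex.ofReal (deriv f x)) x :=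
    fun x => ((hf.differentiable one_ne_zero x).hasDerivAt).ofReal_comp
  have hdc : deriv fc = fun x => Complex.ofReal (deriv f x) := funext fun x => (hd x).deriv
  have hd' : ∀ x, HasDerivAt fc (deriv fc x) x := fun x => by rw [hdc]; exact hd x
  have hc' : Continuous (deriv fc) := by
    rw [hdc]; exact Complex.continuous_ofReal.comp (hf.continuous_deriv le_rfl)
  have hcont : Continuous fc := Complex.continuous_ofReal.comp hf.continuous
  have hpc' := periodic_deriv_aux fc hpc
  have liftcont : ∀ (g : ℝ → ℂ) (hg : Function.Periodic g T), Continuous g →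
      Continuous (hg.lift : AddCircle T → ℂ) := by
    intro g hg hgc
    refine (isQuotientMap_quotient_mk'.continuous_iff).mpr ?_
    exact hgc
  set F : C(AddCircle T, ℂ) := ⟨hpc.lift, liftcont _ hpc hcont⟩ with hF
  set F' : C(AddCircle T, ℂ) := ⟨hpc'.lift, liftcont _ hpc' hc'⟩ with hF'
  have hP : ∑' n : ℤ, ‖fourierCoeff (⇑F) n‖ ^ 2
      = ∫ t : AddCircle T, ‖F t‖ ^ 2 ∂AddCircle.haarAddCircle := tsum_sq_fourierCoeff_cont_aux F
  have hP' : ∑' n : ℤ, ‖fourierCoeff (⇑F') n‖ ^ 2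
      = ∫ t : AddCircle T, ‖F' t‖ ^ 2 ∂AddCircle.haarAddCircle := tsum_sq_fourierCoeff_cont_aux F'
  have hI : ∫ t in (0:ℝ)..T, f t ^ 2
      = T * ∫ t : AddCircle T, ‖F t‖ ^ 2 ∂AddCircle.haarAddCircle := by
    rw [← haar_integral_eq_aux (fun t => ‖F t‖ ^ 2)]
    refine intervalIntegral.integral_congr fun x _ => ?_
    show f x ^ 2 = ‖F ↑x‖ ^ 2
    simp [hF, Function.Periodic.lift_coe, hfc, Complex.norm_real, sq_abs]
  have hI' : ∫ t in (0:ℝ)..T, deriv f t ^ 2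
      = T * ∫ t : AddCircle T, ‖F' t‖ ^ 2 ∂AddCircle.haarAddCircle := by
    rw [← haar_integral_eq_aux (fun t => ‖F' t‖ ^ 2)]
    refine intervalIntegral.integral_congr fun x _ => ?_
    show deriv f x ^ 2 = ‖F' ↑x‖ ^ 2
    simp [hF', Function.Periodic.lift_coe, hdc, Complex.norm_real, sq_abs]
  have hc0 : fourierCoeff (⇑F) 0 = 0 := by
    rw [fourierCoeff_eq_intervalIntegral (⇑F) 0 0]
    have hcongr : ∀ x : ℝ, fourier (-0) ((x : ℝ) : AddCircle T) • F ↑x = fc x := by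
      intro x
      simp [hF, Function.Periodic.lift_coe]
    rw [intervalIntegral.integral_congr (fun x _ => hcongr x), zero_add]
    have : (∫ x in (0:ℝ)..T, fc x) = ((∫ x in (0:ℝ)..T, f x : ℝ) : ℂ) :=
      intervalIntegral.integral_ofReal
    rw [this, hmean]
    simp
  have hterm : ∀ n : ℤ, ‖fourierCoeff (⇑F) n‖ ^ 2
      ≤ (T / (2 * π)) ^ 2 * ‖fourierCoeff (⇑F') n‖ ^ 2 := by
    intro n
    rcases eq_or_ne n 0 with rfl | hn
    · rw [hc0]
      simp only [norm_zero]
      have : (0:ℝ) ^ 2 = 0 := by norm_num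
      rw [this]
      positivity
    · have h := coeff_rel_aux fc hpc hd' hc' n hn
      have h2 : ‖fourierCoeff (⇑F) n‖ ^ 2 ≤ ((T / (2 * π)) * ‖fourierCoeff (⇑F') n‖) ^ 2 :=
        pow_le_pow_left₀ (norm_nonneg _) h 2
      calc ‖fourierCoeff (⇑F) n‖ ^ 2 ≤ ((T / (2 * π)) * ‖fourierCoeff (⇑F') n‖) ^ 2 := h2
        _ = (T / (2 * π)) ^ 2 * ‖fourierCoeff (⇑F') n‖ ^ 2 := by ring
  have hsum := Summable.tsum_le_tsum hterm (summable_sq_fourierCoeff_aux F)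
    ((summable_sq_fourierCoeff_aux F').mul_left ((T / (2 * π)) ^ 2))
  rw [tsum_mul_left, hP, hP'] at hsum
  rw [hI, hI']
  calc T * ∫ t : AddCircle T, ‖F t‖ ^ 2 ∂AddCircle.haarAddCircle
      ≤ T * ((T / (2 * π)) ^ 2 * ∫ t : AddCircle T, ‖F' t‖ ^ 2 ∂AddCircle.haarAddCircle) :=
        mul_le_mul_of_nonneg_left hsum hT.out.le
    _ = (T / (2 * π)) ^ 2 * (T * ∫ t : AddCircle T, ‖F' t‖ ^ 2 ∂AddCircle.haarAddCircle) := by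
        ring

end WirtingerSection

/-- Uniform a priori `H²`-type estimate for `T`-periodic solutions of
`u'' + c u' + g(u) = μ + e(t)`, when `g' ≤ ω₁ < ω²`. -/
theorem uniform_H2_estimate (T : ℝ) (hT : 0 < T) (ω₁ : ℝ)
    (hω₁ : ω₁ < (2 * π / T) ^ 2)
    (g : ℝ → ℝ) (hg : ContDiff ℝ 1 g) (hg' : ∀ u, deriv g u ≤ ω₁)
    (e : ℝ → ℝ) (he : Function.Periodic e T)
    (heL2 : IntervalIntegrable (fun t => (e t) ^ 2) volume 0 T)
    (heavg : ∫ t in (0:ℝ)..T, e t = 0) :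
    ∃ C > 0, ∀ (c μ : ℝ) (u : ℝ → ℝ), ContDiff ℝ 2 u → Function.Periodic u T →
      (∀ t, iteratedDeriv 2 u t + c * deriv u t + g (u t) = μ + e t) →
      ∫ t in (0:ℝ)..T, ((iteratedDeriv 2 u t) ^ 2 + (deriv u t) ^ 2) ≤ C := by
  haveI : Fact (0 < T) := ⟨hT⟩
  set ω2 : ℝ := (2 * π / T) ^ 2 with hω2
  have hω2pos : 0 < ω2 := by positivity
  set K : ℝ := max ω₁ 0 with hK
  have hK0 : 0 ≤ K := le_max_right _ _
  have hKlt : K < ω2 := max_lt hω₁ hω2pos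
  set ε : ℝ := 1 - K / ω2 with hε
  have hεpos : 0 < ε := by
    have : K / ω2 < 1 := (div_lt_one hω2pos).mpr hKlt
    simp only [hε]; linarith
  set E : ℝ := ∫ t in (0:ℝ)..T, (e t) ^ 2 with hE
  have hE0 : 0 ≤ E := intervalIntegral.integral_nonneg hT.le (fun t _ => sq_nonneg _)
  refine ⟨(1 + 1 / ω2) * (E / ε ^ 2) + 1, by positivity, ?_⟩
  intro c μ u hu hup heq
  set v : ℝ → ℝ := deriv u with hv
  set w : ℝ → ℝ := deriv (deriv u) with hw
  have hid2 : ∀ t, iteratedDeriv 2 u t = w t := by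
    intro t
    rw [show (2:ℕ) = 1 + 1 from rfl, iteratedDeriv_succ, iteratedDeriv_one]
  have hu1 : ContDiff ℝ 1 v := by
    have h2 : ContDiff ℝ (1 + 1 : ℕ) u := by norm_num; exact hu
    exact (contDiff_succ_iff_deriv.mp (by exact_mod_cast h2)).2.2
  have huc : Continuous u := hu.continuous
  have hvc : Continuous v := hu1.continuous
  have hwc : Continuous w := hu1.continuous_deriv le_rfl
  have hvper : Function.Periodic v T := periodic_deriv_aux u hup
  have hwper : Function.Periodic w T := periodic_deriv_aux v hvper
  have hgc : Continuous (fun t => g (u t)) := hg.continuous.comp huc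
  have hgc' : Continuous (fun t => deriv g (u t)) := (hg.continuous_deriv le_rfl).comp huc
  have heq' : ∀ t, w t + c * v t + g (u t) = μ + e t := by
    intro t; have := heq t; rwa [hid2 t] at this
  have hec : Continuous e := by
    have : e = fun t => w t + c * v t + g (u t) - μ := by
      funext t; have := heq' t; linarith
    rw [this]
    exact ((hwc.add (continuous_const.mul hvc)).add hgc).sub continuous_const
  -- boundary values
  have huT : u T = u 0 := by have := hup 0; rwa [zero_add] at this
  have hvT : v T = v 0 := by have := hvper 0; rwa [zero_add] at this
  have hdu : ∀ x, HasDerivAt u (v x) x :=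
    fun x => (hu.differentiable (by norm_num) x).hasDerivAt
  have hdv : ∀ x, HasDerivAt v (w x) x :=
    fun x => (hu1.differentiable one_ne_zero x).hasDerivAt
  -- ∫ w = 0
  have hintw : ∫ t in (0:ℝ)..T, w t = 0 := by
    rw [intervalIntegral.integral_eq_sub_of_hasDerivAt (fun x _ => hdv x)
      (hwc.intervalIntegrable 0 T), hvT, sub_self]
  -- ∫ v = 0
  have hintv : ∫ t in (0:ℝ)..T, v t = 0 := by
    rw [intervalIntegral.integral_eq_sub_of_hasDerivAt (fun x _ => hdu x)
      (hvc.intervalIntegrable 0 T), huT, sub_self]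
  -- ∫ v w = 0
  have hintvw : ∫ t in (0:ℝ)..T, v t * w t = 0 := by
    have h := integral_mul_deriv_eq_deriv_mul (a := 0) (b := T)
      (fun x _ => hdv x) (fun x _ => hdv x)
      (hwc.intervalIntegrable 0 T) (hwc.intervalIntegrable 0 T)
    have h2 : ∫ t in (0:ℝ)..T, w t * v t = ∫ t in (0:ℝ)..T, v t * w t :=
      intervalIntegral.integral_congr fun t _ => mul_comm _ _
    rw [hvT, h2] at h
    linarith
  -- ∫ g(u) w = - ∫ g'(u) v v
  have hgu : ∀ x, HasDerivAt (fun t => g (u t)) (deriv g (u x) * v x) x := by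
    intro x
    exact ((hg.differentiable one_ne_zero (u x)).hasDerivAt).comp x (hdu x)
  have hintgw : ∫ t in (0:ℝ)..T, g (u t) * w t
      = - ∫ t in (0:ℝ)..T, (deriv g (u t) * v t) * v t := by
    have h := integral_mul_deriv_eq_deriv_mul (a := 0) (b := T)
      (fun x _ => hgu x) (fun x _ => hdv x)
      ((hgc'.mul hvc).intervalIntegrable 0 T) (hwc.intervalIntegrable 0 T)
    rw [huT, hvT, sub_self, zero_sub] at h
    exact h
  -- main identity: ∫ w² = ∫ e w + ∫ g'(u) v²
  have hI2eq : ∫ t in (0:ℝ)..T, w t ^ 2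
      = (∫ t in (0:ℝ)..T, e t * w t) + ∫ t in (0:ℝ)..T, (deriv g (u t) * v t) * v t := by
    have hptw : ∀ t, w t ^ 2
        = μ * w t + e t * w t - c * (v t * w t) - g (u t) * w t := by
      intro t
      have h := heq' t
      linear_combination (w t) * h
    rw [intervalIntegral.integral_congr (fun t _ => hptw t)]
    have i1 : IntervalIntegrable (fun t => μ * w t) volume 0 T :=
      ((continuous_const.mul hwc)).intervalIntegrable 0 T
    have i2 : IntervalIntegrable (fun t => e t * w t) volume 0 T :=
      ((hec.mul hwc)).intervalIntegrable 0 T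
    have i3 : IntervalIntegrable (fun t => c * (v t * w t)) volume 0 T :=
      ((continuous_const.mul (hvc.mul hwc))).intervalIntegrable 0 T
    have i4 : IntervalIntegrable (fun t => g (u t) * w t) volume 0 T :=
      ((hgc.mul hwc)).intervalIntegrable 0 T
    rw [intervalIntegral.integral_sub ((i1.add i2).sub i3) i4,
      intervalIntegral.integral_sub (i1.add i2) i3,
      intervalIntegral.integral_add i1 i2,
      intervalIntegral.integral_const_mul, intervalIntegral.integral_const_mul,
      hintw, hintvw, hintgw]
    ring
  set I2 : ℝ := ∫ t in (0:ℝ)..T, w t ^ 2 with hI2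
  set I1 : ℝ := ∫ t in (0:ℝ)..T, v t ^ 2 with hI1
  have hI20 : 0 ≤ I2 := intervalIntegral.integral_nonneg hT.le (fun t _ => sq_nonneg _)
  have hI10 : 0 ≤ I1 := intervalIntegral.integral_nonneg hT.le (fun t _ => sq_nonneg _)
  -- bound ∫ g'(u) v v ≤ K * I1
  have hb1 : ∫ t in (0:ℝ)..T, (deriv g (u t) * v t) * v t ≤ K * I1 := by
    rw [hI1, ← intervalIntegral.integral_const_mul]
    apply intervalIntegral.integral_mono_on hT.le
      (((hgc'.mul hvc).mul hvc).intervalIntegrable 0 T)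
      ((continuous_const.mul (hvc.pow 2)).intervalIntegrable 0 T)
    intro t _
    have h1 : deriv g (u t) ≤ K := (hg' (u t)).trans (le_max_left _ _)
    show deriv g (u t) * v t * v t ≤ K * v t ^ 2
    nlinarith [sq_nonneg (v t), h1]
  -- bound ∫ e w ≤ E/(2ε) + (ε/2) I2
  have hb2 : ∫ t in (0:ℝ)..T, e t * w t ≤ (1 / (2 * ε)) * E + (ε / 2) * I2 := by
    have hpt : ∀ t, e t * w t ≤ (1 / (2 * ε)) * e t ^ 2 + (ε / 2) * w t ^ 2 := by
      intro t
      have hs := sq_nonneg (ε * w t - e t)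
      have h2ε : 0 < 2 * ε := by linarith
      rw [← sub_nonneg]
      have key : (1 / (2 * ε)) * e t ^ 2 + (ε / 2) * w t ^ 2 - e t * w t
          = (ε * w t - e t) ^ 2 / (2 * ε) := by
        field_simp
        ring
      rw [key]
      positivity
    have := intervalIntegral.integral_mono_on (μ := volume) hT.le
      ((hec.mul hwc).intervalIntegrable 0 T)
      (((continuous_const.mul (hec.pow 2)).add
        (continuous_const.mul (hwc.pow 2))).intervalIntegrable 0 T)
      (fun t _ => hpt t)
    simp only [Pi.mul_apply, Pi.add_apply, Pi.pow_apply] at this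
    rw [intervalIntegral.integral_add (f := fun t => 1 / (2 * ε) * e t ^ 2)
        (g := fun t => ε / 2 * w t ^ 2)
        ((continuous_const.mul (hec.pow 2)).intervalIntegrable 0 T)
        ((continuous_const.mul (hwc.pow 2)).intervalIntegrable 0 T),
      intervalIntegral.integral_const_mul, intervalIntegral.integral_const_mul] at this
    exact this
  -- Wirtinger for v
  have hwirt : I1 ≤ (1 / ω2) * I2 := by
    have h := wirtinger_aux (T := T) v hu1 hvper hintv
    have hTπ : (T / (2 * π)) ^ 2 = 1 / ω2 := by
      rw [hω2]
      field_simp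
    rw [hTπ] at h
    exact h
  -- combine
  have hKω : K / ω2 = 1 - ε := by rw [hε]; ring
  have hI2bound : I2 ≤ E / ε ^ 2 := by
    have h1 : I2 ≤ (1 / (2 * ε)) * E + (ε / 2) * I2 + K * I1 := by
      linarith [hI2eq, hb1, hb2]
    have h2 : K * I1 ≤ K * ((1 / ω2) * I2) := mul_le_mul_of_nonneg_left hwirt hK0
    have h3 : K * ((1 / ω2) * I2) = (1 - ε) * I2 := by
      rw [← hKω]; field_simp
    have h5 : (ε / 2) * I2 ≤ (1 / (2 * ε)) * E := by linarith
    have h6 : ε ^ 2 * I2 ≤ E := by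
      have hh := mul_le_mul_of_nonneg_left h5 (show (0:ℝ) ≤ 2 * ε by positivity)
      calc ε ^ 2 * I2 = 2 * ε * ((ε / 2) * I2) := by ring
        _ ≤ 2 * ε * ((1 / (2 * ε)) * E) := hh
        _ = E := by field_simp
    rw [le_div_iff₀ (by positivity : (0:ℝ) < ε ^ 2)]
    linarith
  -- conclude
  have hsplit : ∫ t in (0:ℝ)..T, ((iteratedDeriv 2 u t) ^ 2 + (deriv u t) ^ 2) = I2 + I1 := by
    have hcg : ∀ t, (iteratedDeriv 2 u t) ^ 2 + (deriv u t) ^ 2 = w t ^ 2 + v t ^ 2 := by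
      intro t; rw [hid2 t]
    rw [intervalIntegral.integral_congr (fun t _ => hcg t),
      intervalIntegral.integral_add (f := fun t => w t ^ 2) (g := fun t => v t ^ 2)
        ((hwc.pow 2).intervalIntegrable 0 T)
        ((hvc.pow 2).intervalIntegrable 0 T)]
  rw [hsplit]
  have hI1bound : I1 ≤ (1 / ω2) * (E / ε ^ 2) := by
    calc I1 ≤ (1 / ω2) * I2 := hwirt
      _ ≤ (1 / ω2) * (E / ε ^ 2) :=
        mul_le_mul_of_nonneg_left hI2bound (by positivity)
  have hle : (0:ℝ) ≤ E / ε ^ 2 := by positivity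
  nlinarith [hI2bound, hI1bound]
end

section
/- Let u = ξ + U be a C² T-periodic solution of u'' + c·u' + a(u⁻⁴ − u⁻³) = μ + e(t), with c ≠ 0, ∫₀ᵀ U dt = 0, and ∫₀ᵀ e dt = 0. Then ‖U'‖_{L²(0,T)} ≤ ‖e‖_{L²(0,T)} / |c|, and consequently ‖U‖_{L^∞(ℝ)} ≤ (√T / (2√3|c|)) · ‖e‖_{L²(0,T)}. -/
open MeasureTheory intervalIntegral Real

/-- Cauchy–Schwarz for interval integrals of continuous functions. -/
lemma cs_interval (p q : ℝ) (hpq : p ≤ q) (f g : ℝ → ℝ)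
    (hf : Continuous f) (hg : Continuous g) :
    (∫ x in p..q, f x * g x) ^ 2 ≤
      (∫ x in p..q, f x ^ 2) * (∫ x in p..q, g x ^ 2) := by
  set A := ∫ x in p..q, f x ^ 2 with hA
  set B := ∫ x in p..q, g x ^ 2 with hB
  set C := ∫ x in p..q, f x * g x with hC
  have key : ∀ lam : ℝ, 0 ≤ lam ^ 2 * A - 2 * lam * C + B := by
    intro lam
    have h1 : (0:ℝ) ≤ ∫ x in p..q, (lam * f x - g x) ^ 2 :=
      intervalIntegral.integral_nonneg hpq (fun x _ => sq_nonneg _)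
    have h2 : (∫ x in p..q, (lam * f x - g x) ^ 2) =
        lam ^ 2 * A - 2 * lam * C + B := by
      have e1 : ∀ x : ℝ, (lam * f x - g x) ^ 2 =
          lam ^ 2 * f x ^ 2 - 2 * lam * (f x * g x) + g x ^ 2 := by
        intro x; ring
      simp only [e1]
      rw [intervalIntegral.integral_add (f := fun x => lam ^ 2 * f x ^ 2 - 2 * lam * (f x * g x)) (g := fun x => g x ^ 2) ((continuous_const.mul (hf.pow 2)).intervalIntegrable p q |>.sub
          ((continuous_const.mul (hf.mul hg)).intervalIntegrable p q)) ((hg.pow 2).intervalIntegrable p q),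
        intervalIntegral.integral_sub (f := fun x => lam ^ 2 * f x ^ 2) (g := fun x => 2 * lam * (f x * g x)) ((continuous_const.mul (hf.pow 2)).intervalIntegrable p q)
          ((continuous_const.mul (hf.mul hg)).intervalIntegrable p q),
        intervalIntegral.integral_const_mul, intervalIntegral.integral_const_mul]
    linarith [h1, h2.symm ▸ h1, h2 ▸ h1]
  have hA0 : 0 ≤ A := intervalIntegral.integral_nonneg hpq (fun x _ => sq_nonneg _)
  rcases eq_or_lt_of_le hA0 with h | h
  · -- A = 0 : C must be 0
    have hB0 : 0 ≤ B := intervalIntegral.integral_nonneg hpq (fun x _ => sq_nonneg _)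
    have hC0 : C = 0 := by
      by_contra hne
      have hk := key ((B + 1) / (2 * C))
      rw [← h] at hk
      have e2 : 2 * ((B + 1) / (2 * C)) * C = B + 1 := by field_simp
      nlinarith [hk, e2]
    rw [hC0, ← h]
    nlinarith
  · have hk := key (C / A)
    have e1 : (C/A)^2 * A = C^2/A := by field_simp
    have e2 : 2 * (C/A) * C = 2 * (C^2/A) := by field_simp
    have h1 : C^2/A ≤ B := by linarith [hk, e1, e2]
    have := (div_le_iff₀ h).mp h1
    linarith [this]


set_option maxHeartbeats 1000000 in
/-- Oscillation estimate for the condensed-matter equation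
`u'' + c u' + a(u⁻⁴ − u⁻³) = μ + e(t)`, `c ≠ 0`:
`‖U'‖_{L²} ≤ ‖e‖_{L²}/|c|` and `‖U‖_∞ ≤ (√T/(2√3|c|)) ‖e‖_{L²}`. -/
theorem oscillation_estimate (T a c μ ξ : ℝ) (hT : 0 < T) (hc : c ≠ 0)
    (e U : ℝ → ℝ) (he : Continuous e) (heper : Function.Periodic e T)
    (heavg : ∫ t in (0:ℝ)..T, e t = 0)
    (hU : ContDiff ℝ 2 U) (hUper : Function.Periodic U T)
    (hUavg : ∫ t in (0:ℝ)..T, U t = 0)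
    (hupos : ∀ t, 0 < ξ + U t)
    (heq : ∀ t, iteratedDeriv 2 U t + c * deriv U t +
      a * (1 / (ξ + U t) ^ 4 - 1 / (ξ + U t) ^ 3) = μ + e t) :
    (∫ s in (0:ℝ)..T, (deriv U s) ^ 2) ^ ((1:ℝ)/2) ≤
        (∫ s in (0:ℝ)..T, (e s) ^ 2) ^ ((1:ℝ)/2) / |c| ∧
      ∀ t, |U t| ≤ (Real.sqrt T / (2 * Real.sqrt 3 * |c|)) *
        (∫ s in (0:ℝ)..T, (e s) ^ 2) ^ ((1:ℝ)/2) := by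
  have hcabs : 0 < |c| := abs_pos.mpr hc
  have hc2 : (0:ℝ) < c ^ 2 := by positivity
  set V := deriv U with hVdef
  have hU2 : ContDiff ℝ (1 + 1 : ℕ) U := by exact_mod_cast hU
  have hUdiff : Differentiable ℝ U := hU2.differentiable (by norm_num)
  have hVcd : ContDiff ℝ ((0:ℕ) + 1) V := (contDiff_succ_iff_deriv.mp hU2).2.2
  have hVcont : Continuous V := hVcd.continuous
  have hVdiff : Differentiable ℝ V := (contDiff_succ_iff_deriv.mp hVcd).1
  have hV'cont : Continuous (deriv V) :=
    (contDiff_zero.mp (contDiff_succ_iff_deriv.mp hVcd).2.2)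
  have hDU : ∀ x, HasDerivAt U (V x) x := fun x => (hUdiff x).hasDerivAt
  have hDV : ∀ x, HasDerivAt V (deriv V x) x := fun x => (hVdiff x).hasDerivAt
  have hVper : Function.Periodic V T := by
    intro x
    have h1 : (fun y => U (y + T)) = U := funext hUper
    have h2 : HasDerivAt (fun y => U (y + T)) (V (x + T)) x := by
      exact ((hDU (x + T)).comp x ((hasDerivAt_id x).add_const T)).congr_deriv (mul_one _)
    rw [h1] at h2
    exact h2.deriv.symm
  have hUT : U T = U 0 := by simpa using hUper 0
  have hVT : V T = V 0 := by simpa using hVper 0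
  have heq' : ∀ t, deriv V t + c * V t +
      a * (1 / (ξ + U t) ^ 4 - 1 / (ξ + U t) ^ 3) = μ + e t := by
    intro t
    have h2 : iteratedDeriv 2 U t = deriv V t := by
      rw [show (2:ℕ) = 1 + 1 from rfl, iteratedDeriv_succ, iteratedDeriv_one]
    rw [← h2]; exact heq t
  -- continuity of the nonlinearity
  have hucont : Continuous (fun t => ξ + U t) := continuous_const.add hUdiff.continuous
  have hune : ∀ t, ξ + U t ≠ 0 := fun t => (hupos t).ne'
  have hgcont : Continuous (fun t => a * (1 / (ξ + U t) ^ 4 - 1 / (ξ + U t) ^ 3)) := by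
    apply continuous_const.mul
    exact (continuous_const.div (hucont.pow 4) (fun t => pow_ne_zero _ (hune t))).sub
      (continuous_const.div (hucont.pow 3) (fun t => pow_ne_zero _ (hune t)))
  set Iv := ∫ s in (0:ℝ)..T, V s ^ 2 with hIv
  set Ie := ∫ s in (0:ℝ)..T, e s ^ 2 with hIe
  have hIv0 : 0 ≤ Iv := intervalIntegral.integral_nonneg hT.le (fun x _ => sq_nonneg _)
  have hIe0 : 0 ≤ Ie := intervalIntegral.integral_nonneg hT.le (fun x _ => sq_nonneg _)
  -- FTC piece 1 : ∫ V' V = 0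
  have I1 : ∫ s in (0:ℝ)..T, deriv V s * V s = 0 := by
    have hd : ∀ x ∈ Set.uIcc (0:ℝ) T, HasDerivAt (fun s => V s ^ 2 / 2)
        (deriv V x * V x) x := by
      intro x _
      have := ((hDV x).pow 2).div_const 2
      refine this.congr_deriv ?_
      ring
    rw [intervalIntegral.integral_eq_sub_of_hasDerivAt hd
      ((hV'cont.mul hVcont).intervalIntegrable 0 T)]
    rw [hVT]; ring
  -- FTC piece 2 : ∫ V = 0
  have I2 : ∫ s in (0:ℝ)..T, V s = 0 := by
    have hd : ∀ x ∈ Set.uIcc (0:ℝ) T, HasDerivAt U (V x) x := fun x _ => hDU x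
    rw [intervalIntegral.integral_eq_sub_of_hasDerivAt hd (hVcont.intervalIntegrable 0 T)]
    rw [hUT]; ring
  -- FTC piece 3 : ∫ g(u) V = 0
  have I3 : ∫ s in (0:ℝ)..T,
      (a * (1 / (ξ + U s) ^ 4 - 1 / (ξ + U s) ^ 3)) * V s = 0 := by
    have hd : ∀ x ∈ Set.uIcc (0:ℝ) T, HasDerivAt
        (fun s => a * (-(((ξ + U s) ^ 3)⁻¹ / 3) + ((ξ + U s) ^ 2)⁻¹ / 2))
        ((a * (1 / (ξ + U x) ^ 4 - 1 / (ξ + U x) ^ 3)) * V x) x := by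
      intro x _
      have hw : HasDerivAt (fun s => ξ + U s) (V x) x := (hDU x).const_add ξ
      have h3 : HasDerivAt (fun s => ((ξ + U s) ^ 3)⁻¹)
          (-(3 * (ξ + U x) ^ 2 * V x) / ((ξ + U x) ^ 3) ^ 2) x := by
        have := (hw.pow 3).inv (pow_ne_zero 3 (hune x))
        refine this.congr_deriv ?_
        norm_num
      have h4 : HasDerivAt (fun s => ((ξ + U s) ^ 2)⁻¹)
          (-(2 * (ξ + U x) ^ 1 * V x) / ((ξ + U x) ^ 2) ^ 2) x := by
        have := (hw.pow 2).inv (pow_ne_zero 2 (hune x))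
        refine this.congr_deriv ?_
        norm_num
      have := (((h3.div_const 3).neg.add (h4.div_const 2)).const_mul a)
      refine this.congr_deriv ?_
      have hne := hune x
      field_simp
      ring
    rw [intervalIntegral.integral_eq_sub_of_hasDerivAt hd
      ((hgcont.mul hVcont).intervalIntegrable 0 T)]
    rw [hUT]; ring
  -- energy identity
  have hsum : (∫ s in (0:ℝ)..T, (deriv V s * V s + c * V s ^ 2 +
      (a * (1 / (ξ + U s) ^ 4 - 1 / (ξ + U s) ^ 3)) * V s)) =
      ∫ s in (0:ℝ)..T, (μ * V s + e s * V s) := by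
    apply intervalIntegral.integral_congr
    intro x _
    linear_combination V x * heq' x
  have hiInt1 : IntervalIntegrable (fun s => deriv V s * V s) volume 0 T :=
    (hV'cont.mul hVcont).intervalIntegrable 0 T
  have hiInt2 : IntervalIntegrable (fun s => c * V s ^ 2) volume 0 T :=
    (continuous_const.mul (hVcont.pow 2)).intervalIntegrable 0 T
  have hiInt3 : IntervalIntegrable
      (fun s => (a * (1 / (ξ + U s) ^ 4 - 1 / (ξ + U s) ^ 3)) * V s) volume 0 T :=
    (hgcont.mul hVcont).intervalIntegrable 0 T
  have hiInt4 : IntervalIntegrable (fun s => μ * V s) volume 0 T :=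
    (continuous_const.mul hVcont).intervalIntegrable 0 T
  have hiInt5 : IntervalIntegrable (fun s => e s * V s) volume 0 T :=
    (he.mul hVcont).intervalIntegrable 0 T
  rw [intervalIntegral.integral_add (hiInt1.add hiInt2) hiInt3,
    intervalIntegral.integral_add hiInt1 hiInt2,
    intervalIntegral.integral_add hiInt4 hiInt5,
    intervalIntegral.integral_const_mul, intervalIntegral.integral_const_mul,
    I1, I2, I3] at hsum
  have hkey : c * Iv = ∫ s in (0:ℝ)..T, e s * V s := by
    rw [hIv]; linarith [hsum]
  -- Cauchy-Schwarz
  have hCS : (∫ s in (0:ℝ)..T, e s * V s) ^ 2 ≤ Ie * Iv :=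
    cs_interval 0 T hT.le e V he hVcont
  have hc2Iv : c ^ 2 * Iv ≤ Ie := by
    have h0 : c ^ 2 * Iv ^ 2 ≤ Ie * Iv := by
      have : (c * Iv) ^ 2 ≤ Ie * Iv := hkey ▸ hCS
      nlinarith [this]
    rcases eq_or_lt_of_le hIv0 with h | h
    · rw [← h]; simpa using hIe0
    · nlinarith [h0, h]
  have part1 : Iv ^ ((1:ℝ)/2) ≤ Ie ^ ((1:ℝ)/2) / |c| := by
    rw [← Real.sqrt_eq_rpow, ← Real.sqrt_eq_rpow, le_div_iff₀ hcabs]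
    have : Real.sqrt Iv * |c| = Real.sqrt (Iv * c ^ 2) := by
      rw [Real.sqrt_mul hIv0, Real.sqrt_sq_eq_abs]
    rw [this]
    exact Real.sqrt_le_sqrt (by linarith [hc2Iv])
  refine ⟨part1, ?_⟩
  intro t
  -- representation of U t
  have hintU : ∫ σ in t..(t + T), U σ = 0 := by
    rw [hUper.intervalIntegral_add_eq t 0, zero_add]; exact hUavg
  have hV2per : Function.Periodic (fun x => V x ^ 2) T := fun x => by
    simp [hVper x]
  have hintV2 : ∫ σ in t..(t + T), V σ ^ 2 = Iv := by
    rw [hV2per.intervalIntegral_add_eq t 0, zero_add]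
  have hrep : T * U t = ∫ σ in t..(t + T), (σ - (t + T/2)) * V σ := by
    have hd : ∀ x ∈ Set.uIcc t (t + T), HasDerivAt
        (fun σ => (U σ - U t) * (σ - (t + T/2)))
        ((x - (t + T/2)) * V x + (U x - U t)) x := by
      intro x _
      have := ((hDU x).sub_const (U t)).mul ((hasDerivAt_id x).sub_const (t + T/2))
      refine this.congr_deriv ?_
      simp only [id_eq]
      ring
    have hA : IntervalIntegrable (fun σ => (σ - (t + T/2)) * V σ) volume t (t + T) :=
      ((continuous_id.sub continuous_const).mul hVcont).intervalIntegrable t (t + T)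
    have hB : IntervalIntegrable (fun σ => U σ - U t) volume t (t + T) :=
      (hUdiff.continuous.sub continuous_const).intervalIntegrable t (t + T)
    have hFTC := intervalIntegral.integral_eq_sub_of_hasDerivAt hd (hA.add hB)
    have hUtT : U (t + T) = U t := hUper t
    rw [intervalIntegral.integral_add hA hB,
      intervalIntegral.integral_sub (hUdiff.continuous.intervalIntegrable t (t + T))
        intervalIntegrable_const, hintU, intervalIntegral.integral_const, hUtT] at hFTC
    simp only [sub_self, zero_mul, mul_zero, smul_eq_mul, zero_sub, sub_zero] at hFTC
    have hTT : t + T - t = T := by ring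
    rw [hTT] at hFTC
    linarith [hFTC]
  have hkernel : ∫ σ in t..(t + T), (σ - (t + T/2)) ^ 2 = T ^ 3 / 12 := by
    have hd : ∀ x ∈ Set.uIcc t (t + T), HasDerivAt
        (fun σ => (σ - (t + T/2)) ^ 3 / 3) ((x - (t + T/2)) ^ 2) x := by
      intro x _
      have := (((hasDerivAt_id x).sub_const (t + T/2)).pow 3).div_const 3
      refine this.congr_deriv ?_
      simp only [id_eq]
      push_cast
      ring
    rw [intervalIntegral.integral_eq_sub_of_hasDerivAt hd
      (((continuous_id.sub continuous_const).pow 2).intervalIntegrable t (t + T))]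
    ring
  have hCS2 : (T * U t) ^ 2 ≤ (T ^ 3 / 12) * Iv := by
    rw [hrep]
    calc (∫ σ in t..(t + T), (σ - (t + T/2)) * V σ) ^ 2
        ≤ (∫ σ in t..(t + T), (σ - (t + T/2)) ^ 2) * ∫ σ in t..(t + T), V σ ^ 2 :=
          cs_interval t (t + T) (by linarith) _ V
            (continuous_id.sub continuous_const) hVcont
      _ = (T ^ 3 / 12) * Iv := by rw [hkernel, hintV2]
  -- combine
  have h2' : Iv ≤ Ie / c ^ 2 := by rw [le_div_iff₀ hc2]; linarith [hc2Iv]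
  have h5 : (U t) ^ 2 ≤ T * Ie / (12 * c ^ 2) := by
    have hT2 : (0:ℝ) < T ^ 2 := by positivity
    have h4 : T ^ 2 * (U t) ^ 2 ≤ T ^ 2 * (T * Ie / (12 * c ^ 2)) := by
      have h3 : (T ^ 3 / 12) * Iv ≤ (T ^ 3 / 12) * (Ie / c ^ 2) :=
        mul_le_mul_of_nonneg_left h2' (by positivity)
      have heq2 : T ^ 2 * (T * Ie / (12 * c ^ 2)) = (T ^ 3 / 12) * (Ie / c ^ 2) := by
        ring
      rw [heq2]
      nlinarith [hCS2, h3]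
    exact le_of_mul_le_mul_left h4 hT2
  set K := Real.sqrt T / (2 * Real.sqrt 3 * |c|) * Ie ^ ((1:ℝ)/2) with hK
  have hK0 : 0 ≤ K := by
    apply mul_nonneg
    · positivity
    · exact Real.rpow_nonneg hIe0 _
  have hK2 : K ^ 2 = T * Ie / (12 * c ^ 2) := by
    rw [hK, ← Real.sqrt_eq_rpow]
    rw [mul_pow, div_pow, mul_pow, mul_pow, Real.sq_sqrt hT.le,
      Real.sq_sqrt (by norm_num : (0:ℝ) ≤ 3), Real.sq_sqrt hIe0, sq_abs]
    ring
  calc |U t| = Real.sqrt ((U t) ^ 2) := (Real.sqrt_sq_eq_abs _).symm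
    _ ≤ Real.sqrt (K ^ 2) := Real.sqrt_le_sqrt (by rw [hK2]; exact h5)
    _ = K := Real.sqrt_sq hK0
end
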